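/- Suppose (R_c, R_u) satisfies R_c ≥ I(X; V | Y) and R_u ≥ H(f(X,Y) | V, Y) for some test channel p_{V|X}. Then for every a ∈ [0, R_c], the pair (R_c − a, R_u + a) also satisfies these constraints for some (possibly different) test channel. -/

import Mathlib

open scoped BigOperators

namespace Caching

/-- A finitely supported probability mass function on the sample space `Ω`. -/
structure FinPMF (Ω : Type*) [Fintype Ω] where
  p : Ω → ℝ
  nonneg : ∀ ω, 0 ≤ p ω
  sum_one : ∑ ω, p ω = 1

variable {Ω : Type*} [Fintype Ω]

/-- The probability that the random variable `X` takes the value `x`. -/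
def prob {α : Type*} [DecidableEq α] (μ : FinPMF Ω) (X : Ω → α) (x : α) : ℝ :=
  ∑ ω, if X ω = x then μ.p ω else 0

/-- Shannon entropy (in bits) of a finite discrete random variable. -/
noncomputable def H {α : Type*} [Fintype α] [DecidableEq α] (μ : FinPMF Ω) (X : Ω → α) : ℝ :=
  -∑ x, prob μ X x * Real.logb 2 (prob μ X x)

/-- Conditional entropy `H(X | Y)` (in bits). -/
noncomputable def condH {α β : Type*} [Fintype α] [DecidableEq α] [Fintype β] [DecidableEq β]
    (μ : FinPMF Ω) (X : Ω → α) (Y : Ω → β) : ℝ :=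
  H μ (fun ω => (X ω, Y ω)) - H μ Y

/-- Mutual information `I(X; Y)` (in bits). -/
noncomputable def mutInfo {α β : Type*} [Fintype α] [DecidableEq α] [Fintype β] [DecidableEq β]
    (μ : FinPMF Ω) (X : Ω → α) (Y : Ω → β) : ℝ :=
  H μ X + H μ Y - H μ (fun ω => (X ω, Y ω))

/-- Conditional mutual information `I(X; Y | Z)` (in bits). -/
noncomputable def condMutInfo {α β γ : Type*} [Fintype α] [DecidableEq α] [Fintype β]
    [DecidableEq β] [Fintype γ] [DecidableEq γ]
    (μ : FinPMF Ω) (X : Ω → α) (Y : Ω → β) (Z : Ω → γ) : ℝ :=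
  condH μ X Z + condH μ Y Z - condH μ (fun ω => (X ω, Y ω)) Z

/-- `X` and `Y` are independent. -/
def Indep {α β : Type*} [DecidableEq α] [DecidableEq β]
    (μ : FinPMF Ω) (X : Ω → α) (Y : Ω → β) : Prop :=
  ∀ x y, prob μ (fun ω => (X ω, Y ω)) (x, y) = prob μ X x * prob μ Y y

/-- `V — X — Y` form a Markov chain: `V` and `Y` are conditionally independent given `X`. -/
def MarkovChain {α β γ : Type*} [DecidableEq α] [DecidableEq β] [DecidableEq γ]
    (μ : FinPMF Ω) (V : Ω → γ) (X : Ω → α) (Y : Ω → β) : Prop :=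
  ∀ v x y, prob μ (fun ω => (V ω, X ω, Y ω)) (v, x, y) * prob μ X x
    = prob μ (fun ω => (V ω, X ω)) (v, x) * prob μ (fun ω => (X ω, Y ω)) (x, y)


/-- The joint law on `V × X × Y` induced by a test channel `W = p_{V|X}` and a source pmf `p`. -/
noncomputable def inducedPMF {n : ℕ} {α β : Type*} [Fintype α] [Fintype β]
    (p : α × β → ℝ) (hp0 : ∀ a, 0 ≤ p a) (hp1 : ∑ a, p a = 1)
    (W : Fin n → α → ℝ) (hW0 : ∀ v x, 0 ≤ W v x) (hW1 : ∀ x, ∑ v, W v x = 1) :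
    FinPMF (Fin n × α × β) where
  p := fun ω => W ω.1 ω.2.1 * p ω.2
  nonneg := fun ω => mul_nonneg (hW0 _ _) (hp0 _)
  sum_one := by
    have h : ∑ ω : Fin n × α × β, W ω.1 ω.2.1 * p ω.2
        = ∑ a : α × β, (∑ v, W v a.1) * p a := by
      rw [Fintype.sum_prod_type, Finset.sum_comm]
      simp [Finset.sum_mul]
    rw [h]
    simp only [hW1, one_mul]
    exact hp1

/-- The single-letter rate region for the single-user caching problem:
pairs `(R_c, R_u)` with `R_c ≥ I(X; V | Y)` and `R_u ≥ H(f(X,Y) | V, Y)` for some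
test channel `p_{V|X}` over a finite alphabet (so that `V — X — Y` is a Markov chain). -/
noncomputable def cacheRegion {α β S : Type*} [Fintype α] [DecidableEq α]
    [Fintype β] [DecidableEq β] [Fintype S] [DecidableEq S]
    (p : α × β → ℝ) (hp0 : ∀ a, 0 ≤ p a) (hp1 : ∑ a, p a = 1)
    (f : α → β → S) : Set (ℝ × ℝ) :=
  {R | ∃ (n : ℕ) (W : Fin n → α → ℝ) (hW0 : ∀ v x, 0 ≤ W v x) (hW1 : ∀ x, ∑ v, W v x = 1),
    R.1 ≥ condMutInfo (inducedPMF p hp0 hp1 W hW0 hW1)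
            (fun ω => ω.2.1) (fun ω => ω.1) (fun ω => ω.2.2) ∧
    R.2 ≥ condH (inducedPMF p hp0 hp1 W hW0 hW1)
            (fun ω => f ω.2.1 ω.2.2) (fun ω => (ω.1, ω.2.2))}


section Aux

variable {α β γ δ : Type*}

lemma prob_nonneg' [DecidableEq α] (μ : FinPMF Ω) (X : Ω → α) (x : α) : 0 ≤ prob μ X x := by
  apply Finset.sum_nonneg
  intro ω _
  split
  · exact μ.nonneg ω
  · exact le_refl 0

lemma sum_prob [Fintype α] [DecidableEq α] (μ : FinPMF Ω) (X : Ω → α) :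
    ∑ x, prob μ X x = 1 := by
  unfold prob
  rw [Finset.sum_comm]
  simp [μ.sum_one]

lemma prob_comp [Fintype γ] [DecidableEq γ] [DecidableEq δ] (μ : FinPMF Ω) (T : Ω → γ)
    (g : γ → δ) (s : δ) :
    prob μ (fun ω => g (T ω)) s = ∑ t, if g t = s then prob μ T t else 0 := by
  unfold prob
  have hpush : ∀ t : γ, (if g t = s then ∑ ω, if T ω = t then μ.p ω else 0 else 0)
      = ∑ ω, if g t = s then (if T ω = t then μ.p ω else 0) else 0 := by
    intro t; split <;> simp
  simp only [hpush]
  rw [Finset.sum_comm]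
  apply Finset.sum_congr rfl
  intro ω _
  by_cases h : g (T ω) = s
  · rw [if_pos h, Finset.sum_eq_single (T ω)]
    · simp [h]
    · intro b _ hb
      simp [Ne.symm hb]
    · simp
  · rw [if_neg h]
    symm
    apply Finset.sum_eq_zero
    intro t _
    by_cases ht : T ω = t
    · subst ht; simp [h]
    · simp [ht]

lemma sum_apply_push [Fintype γ] [Fintype δ] [DecidableEq γ] [DecidableEq δ]
    (q : γ → ℝ) (φ : ℝ → ℝ) (hφ : φ 0 = 0) (i : γ → δ) (hi : Function.Injective i) :
    ∑ s, φ (∑ t, if i t = s then q t else 0) = ∑ t, φ (q t) := by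
  rw [← Finset.sum_subset (Finset.subset_univ (Finset.univ.image i))]
  · rw [Finset.sum_image (fun x _ y _ h => hi h)]
    apply Finset.sum_congr rfl
    intro t _
    congr 1
    rw [Finset.sum_eq_single t]
    · rw [if_pos rfl]
    · intro b _ hb
      rw [if_neg (by exact fun hc => hb (hi hc))]
    · intro ht
      exact absurd (Finset.mem_univ t) ht
  · intro s _ hs
    have : ∀ t : γ, ¬ (i t = s) := by
      intro t ht
      exact hs (Finset.mem_image.2 ⟨t, Finset.mem_univ t, ht⟩)
    simp [this, hφ]

lemma H_comp_inj [Fintype γ] [Fintype δ] [DecidableEq γ] [DecidableEq δ]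
    (μ : FinPMF Ω) (T : Ω → γ) (i : γ → δ) (hi : Function.Injective i) :
    H μ (fun ω => i (T ω)) = H μ T := by
  unfold H
  congr 1
  calc ∑ s, prob μ (fun ω => i (T ω)) s * Real.logb 2 (prob μ (fun ω => i (T ω)) s)
      = ∑ s, (fun x => x * Real.logb 2 x) (∑ t, if i t = s then prob μ T t else 0) := by
        apply Finset.sum_congr rfl; intro s _; rw [prob_comp]
    _ = ∑ t, (fun x => x * Real.logb 2 x) (prob μ T t) :=
        sum_apply_push _ (fun x => x * Real.logb 2 x) (by norm_num) i hi

end Aux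

section Submod

variable {A' B' C' : Type*} [Fintype A'] [DecidableEq A'] [Fintype B'] [DecidableEq B']
  [Fintype C'] [DecidableEq C']

lemma entropy_submodular (μ : FinPMF Ω) (A : Ω → A') (B : Ω → B') (Z : Ω → C') :
    H μ (fun ω => (A ω, (B ω, Z ω))) + H μ Z ≤
      H μ (fun ω => (A ω, Z ω)) + H μ (fun ω => (B ω, Z ω)) := by
  classical
  set T : Ω → A' × B' × C' := fun ω => (A ω, B ω, Z ω) with hT
  set q : A' × B' × C' → ℝ := prob μ T with hqdef
  have hq0 : ∀ t, 0 ≤ q t := fun t => prob_nonneg' μ T t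
  set QAZ : A' → C' → ℝ := fun a z => ∑ b, q (a, b, z) with hQAZ
  set QBZ : B' → C' → ℝ := fun b z => ∑ a, q (a, b, z) with hQBZ
  set QZ : C' → ℝ := fun z => ∑ a, ∑ b, q (a, b, z) with hQZ
  have hQAZ0 : ∀ a z, 0 ≤ QAZ a z := fun a z => Finset.sum_nonneg fun b _ => hq0 _
  have hQBZ0 : ∀ b z, 0 ≤ QBZ b z := fun b z => Finset.sum_nonneg fun a _ => hq0 _
  have hQZ0 : ∀ z, 0 ≤ QZ z :=
    fun z => Finset.sum_nonneg fun a _ => Finset.sum_nonneg fun b _ => hq0 _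
  -- marginals
  have hAZ : ∀ a z, prob μ (fun ω => (A ω, Z ω)) (a, z) = QAZ a z := by
    intro a z
    have h : prob μ (fun ω => (A ω, Z ω)) (a, z)
        = ∑ t : A' × B' × C', if (t.1, t.2.2) = (a, z) then prob μ T t else 0 :=
      prob_comp μ T (fun t => (t.1, t.2.2)) (a, z)
    rw [h]
    simp [Fintype.sum_prod_type, Prod.ext_iff, Finset.sum_ite_eq', ite_and, hQAZ]
    rfl
  have hBZ : ∀ b z, prob μ (fun ω => (B ω, Z ω)) (b, z) = QBZ b z := by
    intro b z
    have h : prob μ (fun ω => (B ω, Z ω)) (b, z)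
        = ∑ t : A' × B' × C', if (t.2.1, t.2.2) = (b, z) then prob μ T t else 0 :=
      prob_comp μ T (fun t => (t.2.1, t.2.2)) (b, z)
    rw [h]
    simp [Fintype.sum_prod_type, Prod.ext_iff, Finset.sum_ite_eq', ite_and, hQBZ]
    rfl
  have hZm : ∀ z, prob μ Z z = QZ z := by
    intro z
    have h : prob μ Z z
        = ∑ t : A' × B' × C', if t.2.2 = z then prob μ T t else 0 :=
      prob_comp μ T (fun t => t.2.2) z
    rw [h]
    simp [Fintype.sum_prod_type, Finset.sum_ite_eq', hQZ]
    rfl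
  have hQAZsum : ∀ z, ∑ a, QAZ a z = QZ z := fun z => rfl
  have hQBZsum : ∀ z, ∑ b, QBZ b z = QZ z := by
    intro z
    rw [hQBZ, hQZ]
    exact Finset.sum_comm
  have hqsum : ∑ a, ∑ b, ∑ z, q (a, b, z) = 1 := by
    have := sum_prob μ T
    rw [Fintype.sum_prod_type] at this
    simpa [Fintype.sum_prod_type] using this
  -- entropy expansions
  have eABZ : H μ (fun ω => (A ω, (B ω, Z ω)))
      = -∑ a, ∑ b, ∑ z, q (a, b, z) * Real.logb 2 (q (a, b, z)) := by
    unfold H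
    simp [Fintype.sum_prod_type, hqdef, hT]
  have eAZ : H μ (fun ω => (A ω, Z ω))
      = -∑ a, ∑ b, ∑ z, q (a, b, z) * Real.logb 2 (QAZ a z) := by
    unfold H
    congr 1
    rw [Fintype.sum_prod_type]
    apply Finset.sum_congr rfl
    intro a _
    rw [Finset.sum_comm]
    apply Finset.sum_congr rfl
    intro z _
    rw [hAZ a z, hQAZ]
    simp [Finset.sum_mul]
  have eBZ : H μ (fun ω => (B ω, Z ω))
      = -∑ a, ∑ b, ∑ z, q (a, b, z) * Real.logb 2 (QBZ b z) := by
    unfold H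
    congr 1
    rw [Fintype.sum_prod_type]
    calc ∑ b, ∑ z, prob μ (fun ω => (B ω, Z ω)) (b, z)
          * Real.logb 2 (prob μ (fun ω => (B ω, Z ω)) (b, z))
        = ∑ b, ∑ z, ∑ a, q (a, b, z) * Real.logb 2 (QBZ b z) := by
          apply Finset.sum_congr rfl
          intro b _
          apply Finset.sum_congr rfl
          intro z _
          rw [hBZ b z, hQBZ]
          simp [Finset.sum_mul]
      _ = ∑ b, ∑ a, ∑ z, q (a, b, z) * Real.logb 2 (QBZ b z) :=
          Finset.sum_congr rfl fun b _ => Finset.sum_comm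
      _ = ∑ a, ∑ b, ∑ z, q (a, b, z) * Real.logb 2 (QBZ b z) :=
          Finset.sum_comm
  have eZ : H μ Z = -∑ a, ∑ b, ∑ z, q (a, b, z) * Real.logb 2 (QZ z) := by
    unfold H
    congr 1
    calc ∑ z, prob μ Z z * Real.logb 2 (prob μ Z z)
        = ∑ z, ∑ a, ∑ b, q (a, b, z) * Real.logb 2 (QZ z) := by
          apply Finset.sum_congr rfl
          intro z _
          rw [hZm z, hQZ]
          simp [Finset.sum_mul]
      _ = ∑ a, ∑ z, ∑ b, q (a, b, z) * Real.logb 2 (QZ z) :=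
          Finset.sum_comm
      _ = ∑ a, ∑ b, ∑ z, q (a, b, z) * Real.logb 2 (QZ z) :=
          Finset.sum_congr rfl fun a _ => Finset.sum_comm
  rw [eABZ, eAZ, eBZ, eZ]
  have hlog2 : (0:ℝ) < Real.log 2 := Real.log_pos one_lt_two
  have reorder : ∀ F : A' → B' → C' → ℝ,
      ∑ a, ∑ b, ∑ z, F a b z = ∑ z, ∑ a, ∑ b, F a b z := by
    intro F
    calc ∑ a, ∑ b, ∑ z, F a b z = ∑ a, ∑ z, ∑ b, F a b z :=
          Finset.sum_congr rfl fun a _ => Finset.sum_comm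
      _ = ∑ z, ∑ a, ∑ b, F a b z := Finset.sum_comm
  have hZtot : ∑ z, QZ z = 1 := by
    rw [← hqsum, reorder]
  have hzbound : ∀ z, ∑ a, ∑ b, QAZ a z * QBZ b z / QZ z ≤ QZ z := by
    intro z
    have h1 : ∀ a, ∑ b, QAZ a z * QBZ b z / QZ z = QAZ a z * (QZ z / QZ z) := by
      intro a
      simp only [mul_div_assoc]
      rw [← Finset.mul_sum, ← Finset.sum_div, hQBZsum]
    calc ∑ a, ∑ b, QAZ a z * QBZ b z / QZ z
        = ∑ a, QAZ a z * (QZ z / QZ z) := Finset.sum_congr rfl fun a _ => h1 a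
      _ = QZ z * (QZ z / QZ z) := by rw [← Finset.sum_mul, hQAZsum]
      _ ≤ QZ z := by
        rcases eq_or_lt_of_le (hQZ0 z) with h | h
        · rw [← h]; simp
        · rw [div_self h.ne', mul_one]
  have hsum1 : ∑ a, ∑ b, ∑ z, QAZ a z * QBZ b z / QZ z ≤ 1 := by
    rw [reorder, ← hZtot]
    exact Finset.sum_le_sum fun z _ => hzbound z
  have hterm : ∀ a b z,
      q (a,b,z) * Real.logb 2 (QAZ a z) + q (a,b,z) * Real.logb 2 (QBZ b z)
        - q (a,b,z) * Real.logb 2 (q (a,b,z)) - q (a,b,z) * Real.logb 2 (QZ z)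
      ≤ (QAZ a z * QBZ b z / QZ z - q (a,b,z)) * (Real.log 2)⁻¹ := by
    intro a b z
    rcases eq_or_lt_of_le (hq0 (a,b,z)) with hq | hq
    · rw [← hq]
      simp only [zero_mul, add_zero, sub_zero, zero_add, sub_zero]
      have hm : 0 ≤ QAZ a z * QBZ b z / QZ z :=
        div_nonneg (mul_nonneg (hQAZ0 a z) (hQBZ0 b z)) (hQZ0 z)
      have : (0:ℝ) ≤ (Real.log 2)⁻¹ := inv_nonneg.2 hlog2.le
      nlinarith [mul_nonneg hm this]
    · have hA : 0 < QAZ a z :=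
        lt_of_lt_of_le hq (Finset.single_le_sum (fun b' _ => hq0 (a,b',z)) (Finset.mem_univ b))
      have hB : 0 < QBZ b z :=
        lt_of_lt_of_le hq (Finset.single_le_sum (fun a' _ => hq0 (a',b,z)) (Finset.mem_univ a))
      have hZp : 0 < QZ z := by
        rw [← hQAZsum z]
        exact lt_of_lt_of_le hA (Finset.single_le_sum (fun a' _ => hQAZ0 a' z) (Finset.mem_univ a))
      have hx : 0 < QAZ a z * QBZ b z / (QZ z * q (a,b,z)) := by positivity
      have hle := Real.log_le_sub_one_of_pos hx
      have hiden : q (a,b,z) * Real.logb 2 (QAZ a z) + q (a,b,z) * Real.logb 2 (QBZ b z)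
          - q (a,b,z) * Real.logb 2 (q (a,b,z)) - q (a,b,z) * Real.logb 2 (QZ z)
          = q (a,b,z) * (Real.log (QAZ a z * QBZ b z / (QZ z * q (a,b,z))) * (Real.log 2)⁻¹) := by
        unfold Real.logb
        rw [Real.log_div (mul_pos hA hB).ne' (mul_pos hZp hq).ne',
          Real.log_mul hA.ne' hB.ne', Real.log_mul hZp.ne' hq.ne']
        field_simp
        ring
      rw [hiden]
      calc q (a,b,z) * (Real.log (QAZ a z * QBZ b z / (QZ z * q (a,b,z))) * (Real.log 2)⁻¹)
          ≤ q (a,b,z) * ((QAZ a z * QBZ b z / (QZ z * q (a,b,z)) - 1) * (Real.log 2)⁻¹) := by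
            apply mul_le_mul_of_nonneg_left _ hq.le
            apply mul_le_mul_of_nonneg_right hle (inv_nonneg.2 hlog2.le)
        _ = (QAZ a z * QBZ b z / QZ z - q (a,b,z)) * (Real.log 2)⁻¹ := by
            field_simp
  have key : ∑ a, ∑ b, ∑ z,
      (q (a,b,z) * Real.logb 2 (QAZ a z) + q (a,b,z) * Real.logb 2 (QBZ b z)
        - q (a,b,z) * Real.logb 2 (q (a,b,z)) - q (a,b,z) * Real.logb 2 (QZ z)) ≤ 0 := by
    calc ∑ a, ∑ b, ∑ z,
        (q (a,b,z) * Real.logb 2 (QAZ a z) + q (a,b,z) * Real.logb 2 (QBZ b z)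
          - q (a,b,z) * Real.logb 2 (q (a,b,z)) - q (a,b,z) * Real.logb 2 (QZ z))
        ≤ ∑ a, ∑ b, ∑ z, (QAZ a z * QBZ b z / QZ z - q (a,b,z)) * (Real.log 2)⁻¹ := by
          apply Finset.sum_le_sum
          intro a _
          apply Finset.sum_le_sum
          intro b _
          apply Finset.sum_le_sum
          intro z _
          exact hterm a b z
      _ = ((∑ a, ∑ b, ∑ z, QAZ a z * QBZ b z / QZ z)
            - (∑ a, ∑ b, ∑ z, q (a,b,z))) * (Real.log 2)⁻¹ := by
          simp only [Finset.sum_sub_distrib, Finset.sum_mul, sub_mul]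
      _ ≤ 0 := by
          apply mul_nonpos_of_nonpos_of_nonneg
          · rw [hqsum]
            linarith [hsum1]
          · exact inv_nonneg.2 hlog2.le
  have split : ∑ a, ∑ b, ∑ z,
      (q (a,b,z) * Real.logb 2 (QAZ a z) + q (a,b,z) * Real.logb 2 (QBZ b z)
        - q (a,b,z) * Real.logb 2 (q (a,b,z)) - q (a,b,z) * Real.logb 2 (QZ z))
      = (∑ a, ∑ b, ∑ z, q (a,b,z) * Real.logb 2 (QAZ a z))
        + (∑ a, ∑ b, ∑ z, q (a,b,z) * Real.logb 2 (QBZ b z))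
        - (∑ a, ∑ b, ∑ z, q (a,b,z) * Real.logb 2 (q (a,b,z)))
        - (∑ a, ∑ b, ∑ z, q (a,b,z) * Real.logb 2 (QZ z)) := by
    simp only [Finset.sum_sub_distrib, Finset.sum_add_distrib]
  linarith [key, split.symm.trans_le key]

end Submod

set_option linter.unusedSectionVars false

section Mix

variable {α β γ : Type*} [Fintype α] [DecidableEq α] [Fintype β] [DecidableEq β]
  [Fintype γ] [DecidableEq γ]

/-- probability of `g = s` under the source distribution `p`. -/
noncomputable def probSrc (p : α × β → ℝ) (g : α × β → γ) (s : γ) : ℝ :=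
  ∑ a, if g a = s then p a else 0

/-- entropy of `g` under the source distribution `p`. -/
noncomputable def entSrc (p : α × β → ℝ) (g : α × β → γ) : ℝ :=
  -∑ s, probSrc p g s * Real.logb 2 (probSrc p g s)

/-- binary entropy. -/
noncomputable def binEnt (t : ℝ) : ℝ :=
  -(t * Real.logb 2 t) - (1 - t) * Real.logb 2 (1 - t)

variable {n : ℕ} (p : α × β → ℝ)

lemma probSrc_nonneg (hp0 : ∀ a, 0 ≤ p a) (g : α × β → γ) (s : γ) : 0 ≤ probSrc p g s := by
  apply Finset.sum_nonneg
  intro a _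
  split
  · exact hp0 a
  · exact le_refl 0

lemma sum_probSrc (hp1 : ∑ a, p a = 1) (g : α × β → γ) : ∑ s, probSrc p g s = 1 := by
  unfold probSrc
  rw [Finset.sum_comm]
  simp [hp1]

lemma prob_induced_snd (hp0 : ∀ a, 0 ≤ p a) (hp1 : ∑ a, p a = 1) (W : Fin n → α → ℝ) (hW0 : ∀ v x, 0 ≤ W v x)
    (hW1 : ∀ x, ∑ v, W v x = 1) (g : α × β → γ) (s : γ) :
    prob (inducedPMF p hp0 hp1 W hW0 hW1) (fun ω => g ω.2) s = probSrc p g s := by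
  unfold prob inducedPMF probSrc
  simp only
  rw [Fintype.sum_prod_type, Finset.sum_comm]
  apply Finset.sum_congr rfl
  intro a _
  by_cases h : g a = s
  · simp [h, ← Finset.sum_mul, hW1 a.1]
  · simp [h]

lemma H_induced_snd (hp0 : ∀ a, 0 ≤ p a) (hp1 : ∑ a, p a = 1) (W : Fin n → α → ℝ) (hW0 : ∀ v x, 0 ≤ W v x)
    (hW1 : ∀ x, ∑ v, W v x = 1) (g : α × β → γ) :
    H (inducedPMF p hp0 hp1 W hW0 hW1) (fun ω => g ω.2) = entSrc p g := by
  unfold H entSrc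
  congr 1
  apply Finset.sum_congr rfl
  intro s _
  rw [prob_induced_snd]

lemma prob_induced_pair (hp0 : ∀ a, 0 ≤ p a) (hp1 : ∑ a, p a = 1) (W : Fin n → α → ℝ) (hW0 : ∀ v x, 0 ≤ W v x)
    (hW1 : ∀ x, ∑ v, W v x = 1) (g : α × β → γ) (v : Fin n) (s : γ) :
    prob (inducedPMF p hp0 hp1 W hW0 hW1) (fun ω => (ω.1, g ω.2)) (v, s)
      = ∑ a, if g a = s then W v a.1 * p a else 0 := by
  unfold prob inducedPMF
  simp only
  rw [Fintype.sum_prod_type]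
  rw [Finset.sum_eq_single v]
  · apply Finset.sum_congr rfl
    intro a _
    by_cases h : g a = s <;> simp [h]
  · intro u _ hu
    apply Finset.sum_eq_zero
    intro a _
    simp [Prod.ext_iff, hu]
  · intro hv
    exact absurd (Finset.mem_univ v) hv

/-- mixture of a channel `W` (weight `t`) with a constant channel (weight `1-t`). -/
noncomputable def mixW (t : ℝ) (W : Fin n → α → ℝ) : Fin (n+1) → α → ℝ :=
  fun v x => if h : (v : ℕ) < n then t * W ⟨v, h⟩ x else 1 - t

lemma mixW_nonneg {t : ℝ} (ht0 : 0 ≤ t) (ht1 : t ≤ 1) (W : Fin n → α → ℝ)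
    (hW0 : ∀ v x, 0 ≤ W v x) : ∀ v x, 0 ≤ mixW t W v x := by
  intro v x
  unfold mixW
  split
  · exact mul_nonneg ht0 (hW0 _ _)
  · linarith

lemma mixW_castSucc (t : ℝ) (W : Fin n → α → ℝ) (u : Fin n) (x : α) :
    mixW t W u.castSucc x = t * W u x := by
  unfold mixW
  rw [dif_pos (by simp [u.isLt] : ((u.castSucc : Fin (n+1)) : ℕ) < n)]
  congr 1

lemma mixW_last (t : ℝ) (W : Fin n → α → ℝ) (x : α) :
    mixW t W (Fin.last n) x = 1 - t := by
  unfold mixW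
  rw [dif_neg (by simp)]

lemma mixW_sum {t : ℝ} (W : Fin n → α → ℝ) (hW1 : ∀ x, ∑ v, W v x = 1) :
    ∀ x, ∑ v, mixW t W v x = 1 := by
  intro x
  rw [Fin.sum_univ_castSucc]
  rw [Finset.sum_congr rfl (fun u _ => mixW_castSucc t W u x), mixW_last,
    ← Finset.mul_sum, hW1]
  ring

end Mix

set_option linter.unusedSectionVars true

section Mix2

set_option linter.unusedSectionVars false

variable {α β γ : Type*} [Fintype α] [DecidableEq α] [Fintype β] [DecidableEq β]
  [Fintype γ] [DecidableEq γ] {n : ℕ}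

lemma phi_mul (c x : ℝ) (hc : 0 ≤ c) (hx : 0 ≤ x) :
    (c * x) * Real.logb 2 (c * x) = c * (x * Real.logb 2 x) + x * (c * Real.logb 2 c) := by
  rcases eq_or_lt_of_le hc with h | h
  · rw [← h]; simp
  rcases eq_or_lt_of_le hx with h2 | h2
  · rw [← h2]; simp
  rw [Real.logb_mul h.ne' h2.ne']
  ring

lemma H_induced_mix (p : α × β → ℝ) (hp0 : ∀ a, 0 ≤ p a) (hp1 : ∑ a, p a = 1)
    (W : Fin n → α → ℝ) (hW0 : ∀ v x, 0 ≤ W v x) (hW1 : ∀ x, ∑ v, W v x = 1)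
    {t : ℝ} (ht0 : 0 ≤ t) (ht1 : t ≤ 1) (g : α × β → γ) :
    H (inducedPMF p hp0 hp1 (mixW t W) (mixW_nonneg ht0 ht1 W hW0) (mixW_sum W hW1))
        (fun ω => (ω.1, g ω.2))
      = t * H (inducedPMF p hp0 hp1 W hW0 hW1) (fun ω => (ω.1, g ω.2))
        + (1 - t) * entSrc p g + binEnt t := by
  set μ := inducedPMF p hp0 hp1 W hW0 hW1 with hμ
  set μ' := inducedPMF p hp0 hp1 (mixW t W) (mixW_nonneg ht0 ht1 W hW0) (mixW_sum W hW1) with hμ'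
  let Q : Fin n → γ → ℝ := fun u s => prob μ (fun ω => (ω.1, g ω.2)) (u, s)
  let R : γ → ℝ := probSrc p g
  have hQ0 : ∀ u s, 0 ≤ Q u s := fun u s => prob_nonneg' μ _ _
  have hR0 : ∀ s, 0 ≤ R s := fun s => probSrc_nonneg p hp0 g s
  have e1 : ∀ (u : Fin n) (s : γ),
      prob μ' (fun ω => (ω.1, g ω.2)) (u.castSucc, s) = t * Q u s := by
    intro u s
    show prob μ' (fun ω => (ω.1, g ω.2)) (u.castSucc, s)
      = t * prob μ (fun ω => (ω.1, g ω.2)) (u, s)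
    rw [hμ', hμ, prob_induced_pair, prob_induced_pair, Finset.mul_sum]
    apply Finset.sum_congr rfl
    intro a _
    rw [mixW_castSucc]
    by_cases h : g a = s <;> simp [h, mul_assoc]
  have e2 : ∀ s : γ, prob μ' (fun ω => (ω.1, g ω.2)) (Fin.last n, s) = (1 - t) * R s := by
    intro s
    show prob μ' (fun ω => (ω.1, g ω.2)) (Fin.last n, s) = (1 - t) * probSrc p g s
    rw [hμ', prob_induced_pair]
    unfold probSrc
    rw [Finset.mul_sum]
    apply Finset.sum_congr rfl
    intro a _
    rw [mixW_last]
    by_cases h : g a = s <;> simp [h]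
  have hQsum : ∑ u, ∑ s, Q u s = 1 := by
    have := sum_prob μ (fun ω => (ω.1, g ω.2))
    rw [Fintype.sum_prod_type] at this
    exact this
  have hRsum : ∑ s, R s = 1 := sum_probSrc p hp1 g
  have expand : H μ' (fun ω => (ω.1, g ω.2))
      = -((∑ u : Fin n, ∑ s, (t * Q u s) * Real.logb 2 (t * Q u s))
          + ∑ s, ((1 - t) * R s) * Real.logb 2 ((1 - t) * R s)) := by
    unfold H
    congr 1
    rw [Fintype.sum_prod_type, Fin.sum_univ_castSucc]
    congr 1
    · apply Finset.sum_congr rfl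
      intro u _
      apply Finset.sum_congr rfl
      intro s _
      rw [e1]
    · apply Finset.sum_congr rfl
      intro s _
      rw [e2]
  have b1 : ∑ u : Fin n, ∑ s, (t * Q u s) * Real.logb 2 (t * Q u s)
      = t * (∑ u, ∑ s, Q u s * Real.logb 2 (Q u s)) + t * Real.logb 2 t := by
    calc ∑ u : Fin n, ∑ s, (t * Q u s) * Real.logb 2 (t * Q u s)
        = ∑ u : Fin n, ∑ s, (t * (Q u s * Real.logb 2 (Q u s))
            + Q u s * (t * Real.logb 2 t)) := by
          apply Finset.sum_congr rfl
          intro u _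
          apply Finset.sum_congr rfl
          intro s _
          exact phi_mul t (Q u s) ht0 (hQ0 u s)
      _ = t * (∑ u, ∑ s, Q u s * Real.logb 2 (Q u s))
          + (∑ u, ∑ s, Q u s) * (t * Real.logb 2 t) := by
          simp [Finset.sum_add_distrib, Finset.mul_sum, Finset.sum_mul]
      _ = t * (∑ u, ∑ s, Q u s * Real.logb 2 (Q u s)) + t * Real.logb 2 t := by
          rw [hQsum, one_mul]
  have b2 : ∑ s, ((1 - t) * R s) * Real.logb 2 ((1 - t) * R s)
      = (1 - t) * (∑ s, R s * Real.logb 2 (R s)) + (1 - t) * Real.logb 2 (1 - t) := by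
    calc ∑ s, ((1 - t) * R s) * Real.logb 2 ((1 - t) * R s)
        = ∑ s, ((1 - t) * (R s * Real.logb 2 (R s))
            + R s * ((1 - t) * Real.logb 2 (1 - t))) := by
          apply Finset.sum_congr rfl
          intro s _
          exact phi_mul (1 - t) (R s) (by linarith) (hR0 s)
      _ = (1 - t) * (∑ s, R s * Real.logb 2 (R s))
          + (∑ s, R s) * ((1 - t) * Real.logb 2 (1 - t)) := by
          simp [Finset.sum_add_distrib, Finset.mul_sum, Finset.sum_mul]
      _ = (1 - t) * (∑ s, R s * Real.logb 2 (R s)) + (1 - t) * Real.logb 2 (1 - t) := by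
          rw [hRsum, one_mul]
  have hHμ : H μ (fun ω => (ω.1, g ω.2)) = -∑ u, ∑ s, Q u s * Real.logb 2 (Q u s) := by
    unfold H
    rw [Fintype.sum_prod_type]
  have hent : entSrc p g = -∑ s, R s * Real.logb 2 (R s) := rfl
  rw [expand, b1, b2, hHμ, hent]
  unfold binEnt
  ring

end Mix2

section Struct

set_option linter.unusedSectionVars false

variable {α β S : Type*} [Fintype α] [DecidableEq α] [Fintype β] [DecidableEq β]
  [Fintype S] [DecidableEq S] {n : ℕ}

/-- the source pmf as a FinPMF -/
def srcPMF (p : α × β → ℝ) (hp0 : ∀ a, 0 ≤ p a) (hp1 : ∑ a, p a = 1) : FinPMF (α × β) :=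
  ⟨p, hp0, hp1⟩

lemma entSrc_eq_H {γ : Type*} [Fintype γ] [DecidableEq γ] (p : α × β → ℝ)
    (hp0 : ∀ a, 0 ≤ p a) (hp1 : ∑ a, p a = 1) (g : α × β → γ) :
    entSrc p g = H (srcPMF p hp0 hp1) g := rfl

lemma condMutInfo_induced (p : α × β → ℝ) (hp0 : ∀ a, 0 ≤ p a) (hp1 : ∑ a, p a = 1)
    (W : Fin n → α → ℝ) (hW0 : ∀ v x, 0 ≤ W v x) (hW1 : ∀ x, ∑ v, W v x = 1) :
    condMutInfo (inducedPMF p hp0 hp1 W hW0 hW1)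
        (fun ω => ω.2.1) (fun ω => ω.1) (fun ω => ω.2.2)
      = entSrc p (fun a => a)
        + H (inducedPMF p hp0 hp1 W hW0 hW1) (fun ω => (ω.1, ω.2.2))
        - H (inducedPMF p hp0 hp1 W hW0 hW1) (fun ω => (ω.1, ω.2))
        - entSrc p (fun a => a.2) := by
  set μ := inducedPMF p hp0 hp1 W hW0 hW1 with hμ
  have s0 : H μ (fun ω => (ω.2.1, ω.2.2)) = entSrc p (fun a => a) :=
    H_induced_snd p hp0 hp1 W hW0 hW1 (fun a => a)
  have s1 : H μ (fun ω => ω.2.2) = entSrc p (fun a => a.2) :=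
    H_induced_snd p hp0 hp1 W hW0 hW1 (fun a => a.2)
  have s2 : H μ (fun ω => ((ω.2.1, ω.1), ω.2.2)) = H μ (fun ω => (ω.1, ω.2)) := by
    apply H_comp_inj μ (fun ω => (ω.1, ω.2))
      (i := fun t : Fin n × (α × β) => ((t.2.1, t.1), t.2.2))
    intro ⟨v, a⟩ ⟨v', a'⟩ h
    simp only [Prod.ext_iff] at h ⊢
    exact ⟨h.1.2, h.1.1, h.2⟩
  simp only [condMutInfo, condH]
  rw [s0, s1, s2]
  ring

lemma condH_induced (p : α × β → ℝ) (hp0 : ∀ a, 0 ≤ p a) (hp1 : ∑ a, p a = 1)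
    (f : α → β → S)
    (W : Fin n → α → ℝ) (hW0 : ∀ v x, 0 ≤ W v x) (hW1 : ∀ x, ∑ v, W v x = 1) :
    condH (inducedPMF p hp0 hp1 W hW0 hW1)
        (fun ω => f ω.2.1 ω.2.2) (fun ω => (ω.1, ω.2.2))
      = H (inducedPMF p hp0 hp1 W hW0 hW1) (fun ω => (ω.1, (f ω.2.1 ω.2.2, ω.2.2)))
        - H (inducedPMF p hp0 hp1 W hW0 hW1) (fun ω => (ω.1, ω.2.2)) := by
  set μ := inducedPMF p hp0 hp1 W hW0 hW1 with hμ
  have s1 : H μ (fun ω => (f ω.2.1 ω.2.2, (ω.1, ω.2.2)))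
      = H μ (fun ω => (ω.1, (f ω.2.1 ω.2.2, ω.2.2))) := by
    apply H_comp_inj μ (fun ω => (ω.1, (f ω.2.1 ω.2.2, ω.2.2)))
      (i := fun t : Fin n × (S × β) => (t.2.1, (t.1, t.2.2)))
    intro ⟨v, s, y⟩ ⟨v', s', y'⟩ h
    simp only [Prod.ext_iff] at h ⊢
    exact ⟨h.2.1, h.1, h.2.2⟩
  simp only [condH]
  rw [s1]

lemma sumrate_bound (p : α × β → ℝ) (hp0 : ∀ a, 0 ≤ p a) (hp1 : ∑ a, p a = 1)
    (f : α → β → S)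
    (W : Fin n → α → ℝ) (hW0 : ∀ v x, 0 ≤ W v x) (hW1 : ∀ x, ∑ v, W v x = 1) :
    entSrc p (fun a => (f a.1 a.2, a.2))
        + H (inducedPMF p hp0 hp1 W hW0 hW1) (fun ω => (ω.1, ω.2))
      ≤ entSrc p (fun a => a)
        + H (inducedPMF p hp0 hp1 W hW0 hW1) (fun ω => (ω.1, (f ω.2.1 ω.2.2, ω.2.2))) := by
  set μ := inducedPMF p hp0 hp1 W hW0 hW1 with hμ
  have sub := entropy_submodular μ (fun ω => ω.2.1) (fun ω => ω.1)
    (fun ω => (f ω.2.1 ω.2.2, ω.2.2))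
  have s1 : H μ (fun ω => (ω.2.1, (ω.1, (f ω.2.1 ω.2.2, ω.2.2))))
      = H μ (fun ω => (ω.1, ω.2)) := by
    apply H_comp_inj μ (fun ω => (ω.1, ω.2))
      (i := fun t : Fin n × (α × β) => (t.2.1, (t.1, (f t.2.1 t.2.2, t.2.2))))
    intro ⟨v, a⟩ ⟨v', a'⟩ h
    simp only [Prod.ext_iff] at h ⊢
    exact ⟨h.2.1, h.1, h.2.2.2⟩
  have s2 : H μ (fun ω => (f ω.2.1 ω.2.2, ω.2.2)) = entSrc p (fun a => (f a.1 a.2, a.2)) :=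
    H_induced_snd p hp0 hp1 W hW0 hW1 (fun a => (f a.1 a.2, a.2))
  have s3 : H μ (fun ω => (ω.2.1, (f ω.2.1 ω.2.2, ω.2.2))) = entSrc p (fun a => a) := by
    have h1 : H μ (fun ω => (ω.2.1, (f ω.2.1 ω.2.2, ω.2.2)))
        = entSrc p (fun a => (a.1, (f a.1 a.2, a.2))) :=
      H_induced_snd p hp0 hp1 W hW0 hW1 (fun a => (a.1, (f a.1 a.2, a.2)))
    rw [h1, entSrc_eq_H p hp0 hp1, entSrc_eq_H p hp0 hp1]
    apply H_comp_inj (srcPMF p hp0 hp1) (fun a => a)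
      (i := fun t : α × β => (t.1, (f t.1 t.2, t.2)))
    intro ⟨x, y⟩ ⟨x', y'⟩ h
    simp only [Prod.ext_iff] at h ⊢
    exact ⟨h.1, h.2.2⟩
  rw [s1, s2, s3] at sub
  linarith

end Struct
/-- If `(R_c, R_u)` is in the single-letter region, then for every `a ∈ [0, R_c]` so is
`(R_c − a, R_u + a)`. -/
theorem cacheRegion_transfer {α β S : Type*} [Fintype α] [DecidableEq α]
    [Fintype β] [DecidableEq β] [Fintype S] [DecidableEq S]
    (p : α × β → ℝ) (hp0 : ∀ a, 0 ≤ p a) (hp1 : ∑ a, p a = 1) (f : α → β → S)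
    (R : ℝ × ℝ) (hR : R ∈ cacheRegion p hp0 hp1 f)
    (a : ℝ) (ha0 : 0 ≤ a) (ha1 : a ≤ R.1) :
    (R.1 - a, R.2 + a) ∈ cacheRegion p hp0 hp1 f := by
  obtain ⟨n, W, hW0, hW1, h1, h2⟩ := hR
  set μ := inducedPMF p hp0 hp1 W hW0 hW1 with hμ
  rw [condMutInfo_induced p hp0 hp1 W hW0 hW1] at h1
  rw [condH_induced p hp0 hp1 f W hW0 hW1] at h2
  have hB := sumrate_bound p hp0 hp1 f W hW0 hW1
  rcases eq_or_lt_of_le ha0 with haz | hap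
  · -- a = 0 : reuse the same channel
    refine ⟨n, W, hW0, hW1, ?_, ?_⟩
    · rw [condMutInfo_induced p hp0 hp1 W hW0 hW1]
      show R.1 - a ≥ _
      rw [← haz, sub_zero]
      exact h1
    · rw [condH_induced p hp0 hp1 f W hW0 hW1]
      show R.2 + a ≥ _
      rw [← haz, add_zero]
      exact h2
  · -- a > 0 : time sharing with the constant channel
    have hR1 : 0 < R.1 := lt_of_lt_of_le hap ha1
    set t : ℝ := 1 - a / R.1 with hts
    have ht0 : 0 ≤ t := by
      have : a / R.1 ≤ 1 := (div_le_one hR1).2 ha1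
      rw [hts]; linarith
    have ht1 : t ≤ 1 := by
      have : 0 ≤ a / R.1 := div_nonneg ha0 hR1.le
      rw [hts]; linarith
    have hat : (1 - t) * R.1 = a := by
      rw [hts]
      field_simp
      ring
    have htR : t * R.1 = R.1 - a := by linear_combination -hat
    refine ⟨n + 1, mixW t W, mixW_nonneg ht0 ht1 W hW0, mixW_sum W hW1, ?_, ?_⟩
    · -- cache rate
      rw [condMutInfo_induced p hp0 hp1 (mixW t W) (mixW_nonneg ht0 ht1 W hW0)
        (mixW_sum W hW1)]
      have m1 : H (inducedPMF p hp0 hp1 (mixW t W) (mixW_nonneg ht0 ht1 W hW0)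
            (mixW_sum W hW1)) (fun ω => (ω.1, ω.2.2))
          = t * H μ (fun ω => (ω.1, ω.2.2)) + (1 - t) * entSrc p (fun a => a.2) + binEnt t :=
        H_induced_mix p hp0 hp1 W hW0 hW1 ht0 ht1 (fun a => a.2)
      have m2 : H (inducedPMF p hp0 hp1 (mixW t W) (mixW_nonneg ht0 ht1 W hW0)
            (mixW_sum W hW1)) (fun ω => (ω.1, ω.2))
          = t * H μ (fun ω => (ω.1, ω.2)) + (1 - t) * entSrc p (fun a => a) + binEnt t :=
        H_induced_mix p hp0 hp1 W hW0 hW1 ht0 ht1 (fun a => a)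
      rw [m1, m2]
      show R.1 - a ≥ _
      have hexp : entSrc p (fun a => a)
            + (t * H μ (fun ω => (ω.1, ω.2.2)) + (1 - t) * entSrc p (fun a => a.2) + binEnt t)
            - (t * H μ (fun ω => (ω.1, ω.2)) + (1 - t) * entSrc p (fun a => a) + binEnt t)
            - entSrc p (fun a => a.2)
          = t * (entSrc p (fun a => a) + H μ (fun ω => (ω.1, ω.2.2))
              - H μ (fun ω => (ω.1, ω.2)) - entSrc p (fun a => a.2)) := by ring
      rw [ge_iff_le, hexp, ← htR]
      exact mul_le_mul_of_nonneg_left h1 ht0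
    · -- update rate
      rw [condH_induced p hp0 hp1 f (mixW t W) (mixW_nonneg ht0 ht1 W hW0) (mixW_sum W hW1)]
      have m1 : H (inducedPMF p hp0 hp1 (mixW t W) (mixW_nonneg ht0 ht1 W hW0)
            (mixW_sum W hW1)) (fun ω => (ω.1, ω.2.2))
          = t * H μ (fun ω => (ω.1, ω.2.2)) + (1 - t) * entSrc p (fun a => a.2) + binEnt t :=
        H_induced_mix p hp0 hp1 W hW0 hW1 ht0 ht1 (fun a => a.2)
      have m3 : H (inducedPMF p hp0 hp1 (mixW t W) (mixW_nonneg ht0 ht1 W hW0)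
            (mixW_sum W hW1)) (fun ω => (ω.1, (f ω.2.1 ω.2.2, ω.2.2)))
          = t * H μ (fun ω => (ω.1, (f ω.2.1 ω.2.2, ω.2.2)))
            + (1 - t) * entSrc p (fun a => (f a.1 a.2, a.2)) + binEnt t :=
        H_induced_mix p hp0 hp1 W hW0 hW1 ht0 ht1 (fun a => (f a.1 a.2, a.2))
      rw [m1, m3]
      show R.2 + a ≥ _
      have hexp : (t * H μ (fun ω => (ω.1, (f ω.2.1 ω.2.2, ω.2.2)))
            + (1 - t) * entSrc p (fun a => (f a.1 a.2, a.2)) + binEnt t)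
            - (t * H μ (fun ω => (ω.1, ω.2.2)) + (1 - t) * entSrc p (fun a => a.2) + binEnt t)
          = t * (H μ (fun ω => (ω.1, (f ω.2.1 ω.2.2, ω.2.2))) - H μ (fun ω => (ω.1, ω.2.2)))
            + (1 - t) * (entSrc p (fun a => (f a.1 a.2, a.2)) - entSrc p (fun a => a.2)) := by
        ring
      rw [ge_iff_le, hexp]
      have hC : entSrc p (fun a => (f a.1 a.2, a.2)) - entSrc p (fun a => a.2)
          ≤ R.1 + R.2 := by linarith
      have hU : t * (H μ (fun ω => (ω.1, (f ω.2.1 ω.2.2, ω.2.2)))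
            - H μ (fun ω => (ω.1, ω.2.2))) ≤ t * R.2 :=
        mul_le_mul_of_nonneg_left h2 ht0
      have hC' : (1 - t) * (entSrc p (fun a => (f a.1 a.2, a.2)) - entSrc p (fun a => a.2))
          ≤ (1 - t) * (R.1 + R.2) :=
        mul_le_mul_of_nonneg_left hC (by linarith)
      have hfin : t * R.2 + (1 - t) * (R.1 + R.2) = R.2 + a := by linear_combination hat
      linarith

end Caching
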